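/- Fix a spin weight s∈ℤ, an integer ℓ≥|s|, and σ∈ℂ. Let Ψ̂:(1,∞)→ℂ be twice differentiable and define Φ̂(ρ) = e^{σρ_*(ρ)} (ρ/(ρ−1))^s Ψ̂(ρ), where e^{σρ_*(ρ)} = e^{σρ}(ρ−1)^σ with (ρ−1)^σ = exp(σ log(ρ−1)). Then Ψ̂ satisfies the frequency-domain Bardeen–Press equation −∂_{ρ_*}²Ψ̂ + (2s(ρ−1/2)/ρ²)∂_{ρ_*}Ψ̂ + (2sσ(ρ−3/2)/ρ²)Ψ̂ + V(ρ)Ψ̂ + σ²Ψ̂ = 0 on (1,∞) if and only if Φ̂ satisfies the confluent Heun normal form Φ̂''(ρ) + P(ρ,σ)Φ̂'(ρ) + Q(ρ)Φ̂(ρ) = 0 on (1,∞). -/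

import Mathlib

noncomputable section

/-- `P(ρ,σ) = −2σ − (3s+1)/ρ + (1+s−2σ)/(ρ−1)`. -/
def Pcoef (s : ℤ) (σ ρ : ℂ) : ℂ := -2*σ - (3*(s:ℂ)+1)/ρ + (1+(s:ℂ)-2*σ)/(ρ-1)

/-- `Q(ρ) = (s+1)(2s+1)/ρ² − ((s+1)²+ℓ(ℓ+1))/(ρ(ρ−1))`. -/
def Qcoef (s ℓ : ℤ) (ρ : ℂ) : ℂ :=
  ((s:ℂ)+1)*(2*(s:ℂ)+1)/ρ^2 - (((s:ℂ)+1)^2 + (ℓ:ℂ)*((ℓ:ℂ)+1))/(ρ*(ρ-1))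

/-- The Bardeen–Press potential
`V(ρ) = (1−1/ρ)[(s+1)/ρ³ + (ℓ−s)(ℓ+s+1)/ρ²]`. -/
def Vpot (s ℓ : ℤ) (ρ : ℝ) : ℂ :=
  (1 - 1/(ρ:ℂ)) * (((s:ℂ)+1)/(ρ:ℂ)^3 + ((ℓ:ℂ)-(s:ℂ))*((ℓ:ℂ)+(s:ℂ)+1)/(ρ:ℂ)^2)

/-- The tortoise-coordinate derivative `∂_{ρ_*} = ((ρ−1)/ρ)∂_ρ` acting on
functions of `ρ`. -/
def Dstar (F : ℝ → ℂ) (ρ : ℝ) : ℂ := (((ρ:ℂ) - 1)/(ρ:ℂ)) * deriv F ρ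

/-- `Φ̂(ρ) = e^{σρ_*(ρ)} (ρ/(ρ−1))^s Ψ̂(ρ)`, with
`e^{σρ_*(ρ)} = e^{σρ}(ρ−1)^σ` and `(ρ−1)^σ = exp(σ log(ρ−1))`. -/
def PhiOfPsi (s : ℤ) (σ : ℂ) (Ψ : ℝ → ℂ) (ρ : ℝ) : ℂ :=
  Complex.exp (σ*(ρ:ℂ)) * Complex.exp (σ * (Real.log (ρ-1) : ℂ)) *
    ((ρ:ℂ)/((ρ:ℂ)-1))^s * Ψ ρ

/-- The exponent so that the prefactor of `Ψ̂` in `Φ̂` is `exp (Efun s σ ρ)`. -/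
def Efun (s : ℤ) (σ : ℂ) (t : ℝ) : ℂ :=
  σ*(t:ℂ) + σ*(Real.log (t-1) : ℂ) +
    ((s:ℂ)*(Real.log t : ℂ) - (s:ℂ)*(Real.log (t-1) : ℂ))

/-- The logarithmic derivative of the prefactor. -/
def hfun (s : ℤ) (σ : ℂ) (t : ℝ) : ℂ :=
  σ + σ*((t:ℂ)-1)⁻¹ + ((s:ℂ)*(t:ℂ)⁻¹ - (s:ℂ)*((t:ℂ)-1)⁻¹)

lemma zpow_eq_exp (s : ℤ) {t : ℝ} (ht : 1 < t) :
    ((t:ℂ)/((t:ℂ)-1))^s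
      = Complex.exp ((s:ℂ)*(Real.log t : ℂ) - (s:ℂ)*(Real.log (t-1) : ℂ)) := by
  have ht0 : (0:ℝ) < t := lt_trans one_pos ht
  have ht1 : (0:ℝ) < t - 1 := by linarith
  have hr : ((t:ℂ)/((t:ℂ)-1)) = ((t/(t-1) : ℝ) : ℂ) := by push_cast; ring
  rw [hr, ← Complex.ofReal_zpow]
  have h2 : (t/(t-1)) ^ s = Real.exp (Real.log (t/(t-1)) * (s:ℝ)) := by
    rw [← Real.rpow_intCast, Real.rpow_def_of_pos (div_pos ht0 ht1)]
  rw [h2, Complex.ofReal_exp]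
  congr 1
  rw [Real.log_div (ne_of_gt ht0) (ne_of_gt ht1)]
  push_cast; ring

lemma phi_eq (s : ℤ) (σ : ℂ) (Ψ : ℝ → ℂ) {t : ℝ} (ht : 1 < t) :
    PhiOfPsi s σ Ψ t = Complex.exp (Efun s σ t) * Ψ t := by
  rw [PhiOfPsi, zpow_eq_exp s ht, Efun, Complex.exp_add, Complex.exp_add]

lemma hasDerivAt_Efun (s : ℤ) (σ : ℂ) {t : ℝ} (ht : 1 < t) :
    HasDerivAt (Efun s σ) (hfun s σ t) t := by
  have ht0 : t ≠ 0 := ne_of_gt (by linarith)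
  have ht1 : t - 1 ≠ 0 := ne_of_gt (by linarith)
  have hRe : HasDerivAt (fun u : ℝ => (u:ℂ)) 1 t := by
    exact Complex.ofRealCLM.hasDerivAt (x := t)
  have hlog0 : HasDerivAt (fun u : ℝ => ((Real.log u : ℝ) : ℂ)) ((t⁻¹ : ℝ) : ℂ) t :=
    (Real.hasDerivAt_log ht0).ofReal_comp
  have hlogm : HasDerivAt (fun u : ℝ => ((Real.log (u-1) : ℝ) : ℂ)) (((t-1)⁻¹ : ℝ) : ℂ) t := by
    have := (Real.hasDerivAt_log ht1).comp t ((hasDerivAt_id t).sub_const 1)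
    simpa using this.ofReal_comp
  have H := ((hRe.const_mul σ).add (hlogm.const_mul σ)).add
    ((hlog0.const_mul (s:ℂ)).sub (hlogm.const_mul (s:ℂ)))
  convert H using 1
  · rfl
  · rfl
  unfold hfun
  push_cast
  ring

lemma hasDerivAt_hfun (s : ℤ) (σ : ℂ) {t : ℝ} (ht : 1 < t) :
    HasDerivAt (hfun s σ)
      (σ * (-1 / ((t:ℂ)-1)^2) +
        ((s:ℂ) * (-1 / (t:ℂ)^2) - (s:ℂ) * (-1 / ((t:ℂ)-1)^2))) t := by
  have ht0 : (t:ℂ) ≠ 0 := Complex.ofReal_ne_zero.mpr (ne_of_gt (by linarith))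
  have ht1 : (t:ℂ) - 1 ≠ 0 := by
    have h : ((t - 1 : ℝ) : ℂ) ≠ 0 := Complex.ofReal_ne_zero.mpr (ne_of_gt (by linarith))
    have h2 : ((t - 1 : ℝ) : ℂ) = (t:ℂ) - 1 := by push_cast; ring
    rwa [h2] at h
  have hRe : HasDerivAt (fun u : ℝ => (u:ℂ)) 1 t := by
    exact Complex.ofRealCLM.hasDerivAt (x := t)
  have hinv0 : HasDerivAt (fun u : ℝ => ((u:ℂ))⁻¹)
      ((0*(t:ℂ) - 1*1) / (t:ℂ)^2) t := by
    simpa only [Pi.div_def, one_div] using (hasDerivAt_const t (1:ℂ)).div hRe ht0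
  have hinv1 : HasDerivAt (fun u : ℝ => ((u:ℂ)-1)⁻¹)
      ((0*((t:ℂ)-1) - 1*1) / ((t:ℂ)-1)^2) t := by
    simpa only [Pi.div_def, one_div] using (hasDerivAt_const t (1:ℂ)).div (hRe.sub_const 1) ht1
  have H := ((hasDerivAt_const t σ).add (hinv1.const_mul σ)).add
    ((hinv0.const_mul (s:ℂ)).sub (hinv1.const_mul (s:ℂ)))
  convert H using 1
  · rfl
  · rfl
  ring

set_option maxHeartbeats 2000000 in
lemma key (s ℓ : ℤ) (σ : ℂ) (Ψ : ℝ → ℂ)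
    (hΨ1 : ∀ ρ ∈ Set.Ioi (1:ℝ), DifferentiableAt ℝ Ψ ρ)
    (hΨ2 : ∀ ρ ∈ Set.Ioi (1:ℝ), DifferentiableAt ℝ (deriv Ψ) ρ)
    {ρ : ℝ} (hρ : ρ ∈ Set.Ioi (1:ℝ)) :
    deriv (deriv (PhiOfPsi s σ Ψ)) ρ + Pcoef s σ (ρ:ℂ) * deriv (PhiOfPsi s σ Ψ) ρ +
        Qcoef s ℓ (ρ:ℂ) * PhiOfPsi s σ Ψ ρ
      = (-(Complex.exp (Efun s σ ρ)) * (ρ:ℂ)^2 / ((ρ:ℂ)-1)^2) *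
        (-(Dstar (Dstar Ψ) ρ) + (2*(s:ℂ)*((ρ:ℂ) - 1/2)/(ρ:ℂ)^2) * Dstar Ψ ρ +
          (2*(s:ℂ)*σ*((ρ:ℂ) - 3/2)/(ρ:ℂ)^2) * Ψ ρ + Vpot s ℓ ρ * Ψ ρ +
          σ^2 * Ψ ρ) := by
  have hρ' : 1 < ρ := hρ
  have ht0 : (ρ:ℂ) ≠ 0 := Complex.ofReal_ne_zero.mpr (ne_of_gt (by linarith))
  have ht1 : (ρ:ℂ) - 1 ≠ 0 := by
    have h : ((ρ - 1 : ℝ) : ℂ) ≠ 0 := Complex.ofReal_ne_zero.mpr (ne_of_gt (by linarith))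
    have h2 : ((ρ - 1 : ℝ) : ℂ) = (ρ:ℂ) - 1 := by push_cast; ring
    rwa [h2] at h
  -- first derivative of Φ on Ioi 1
  have derivPhi : ∀ t ∈ Set.Ioi (1:ℝ),
      deriv (PhiOfPsi s σ Ψ) t
        = Complex.exp (Efun s σ t) * hfun s σ t * Ψ t
            + Complex.exp (Efun s σ t) * deriv Ψ t := by
    intro t ht
    have hev : PhiOfPsi s σ Ψ =ᶠ[nhds t] fun u => Complex.exp (Efun s σ u) * Ψ u :=
      Filter.eventuallyEq_of_mem (isOpen_Ioi.mem_nhds ht) (fun u hu => phi_eq s σ Ψ hu)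
    have hG : HasDerivAt (fun u : ℝ => Complex.exp (Efun s σ u))
        (Complex.exp (Efun s σ t) * hfun s σ t) t := (hasDerivAt_Efun s σ ht).cexp
    have hprod := hG.mul (hΨ1 t ht).hasDerivAt
    rw [hev.deriv_eq]; exact hprod.deriv
  -- second derivative of Φ at ρ
  have hG : HasDerivAt (fun u : ℝ => Complex.exp (Efun s σ u))
      (Complex.exp (Efun s σ ρ) * hfun s σ ρ) ρ := (hasDerivAt_Efun s σ hρ').cexp
  have hev2 : deriv (PhiOfPsi s σ Ψ) =ᶠ[nhds ρ]
      fun u => Complex.exp (Efun s σ u) * hfun s σ u * Ψ u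
            + Complex.exp (Efun s σ u) * deriv Ψ u :=
    Filter.eventuallyEq_of_mem (isOpen_Ioi.mem_nhds hρ) derivPhi
  have hF : HasDerivAt (fun u => Complex.exp (Efun s σ u) * hfun s σ u * Ψ u
            + Complex.exp (Efun s σ u) * deriv Ψ u)
      ((Complex.exp (Efun s σ ρ) * hfun s σ ρ * hfun s σ ρ
          + Complex.exp (Efun s σ ρ) *
            (σ * (-1 / ((ρ:ℂ)-1)^2) +
              ((s:ℂ) * (-1 / (ρ:ℂ)^2) - (s:ℂ) * (-1 / ((ρ:ℂ)-1)^2)))) * Ψ ρ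
        + Complex.exp (Efun s σ ρ) * hfun s σ ρ * deriv Ψ ρ
        + (Complex.exp (Efun s σ ρ) * hfun s σ ρ * deriv Ψ ρ
            + Complex.exp (Efun s σ ρ) * deriv (deriv Ψ) ρ)) ρ :=
    ((hG.mul (hasDerivAt_hfun s σ hρ')).mul (hΨ1 ρ hρ).hasDerivAt).add
      (hG.mul (hΨ2 ρ hρ).hasDerivAt)
  -- derivative of Dstar Ψ at ρ
  have hRe : HasDerivAt (fun u : ℝ => (u:ℂ)) 1 ρ := by
    exact Complex.ofRealCLM.hasDerivAt (x := ρ)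
  have hw : HasDerivAt (fun u : ℝ => ((u:ℂ)-1)/(u:ℂ))
      ((1*(ρ:ℂ) - ((ρ:ℂ)-1)*1)/(ρ:ℂ)^2) ρ := (hRe.sub_const 1).div hRe ht0
  have hDs : deriv (Dstar Ψ) ρ
      = (1*(ρ:ℂ) - ((ρ:ℂ)-1)*1)/(ρ:ℂ)^2 * deriv Ψ ρ
        + ((ρ:ℂ)-1)/(ρ:ℂ) * deriv (deriv Ψ) ρ := by
    have heq : Dstar Ψ = fun u : ℝ => ((u:ℂ)-1)/(u:ℂ) * deriv Ψ u := rfl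
    rw [heq]; exact (hw.mul (hΨ2 ρ hρ).hasDerivAt).deriv
  have hDD : Dstar (Dstar Ψ) ρ
      = (((ρ:ℂ)-1)/(ρ:ℂ)) * ((1*(ρ:ℂ) - ((ρ:ℂ)-1)*1)/(ρ:ℂ)^2 * deriv Ψ ρ
        + ((ρ:ℂ)-1)/(ρ:ℂ) * deriv (deriv Ψ) ρ) := by
    rw [Dstar, hDs]
  rw [hev2.deriv_eq, hF.deriv, derivPhi ρ hρ, phi_eq s σ Ψ hρ', hDD]
  unfold Pcoef Qcoef Vpot Dstar hfun
  have hu : (ρ:ℂ) * (ρ:ℂ)⁻¹ = 1 := mul_inv_cancel₀ ht0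
  have hv : ((ρ:ℂ)-1) * ((ρ:ℂ)-1)⁻¹ = 1 := mul_inv_cancel₀ ht1
  have huv : (ρ:ℂ)⁻¹ * ((ρ:ℂ)-1)⁻¹ = ((ρ:ℂ)-1)⁻¹ - (ρ:ℂ)⁻¹ := by
    linear_combination ((ρ:ℂ)-1)⁻¹ * hu - (ρ:ℂ)⁻¹ * hv
  simp only [div_eq_mul_inv, mul_inv, ← inv_pow, one_div]
  linear_combination ((-1*((ρ:ℂ)-1)⁻¹^2*(Complex.exp (Efun s σ ρ))*(deriv (deriv Ψ) ρ)) + (-1*((ρ:ℂ)-1)⁻¹^2*(deriv Ψ ρ)*(Complex.exp (Efun s σ ρ))) + (1*((ρ:ℂ)-1)⁻¹^2*(ℓ:ℂ)*(Ψ ρ)*(Complex.exp (Efun s σ ρ))) + (1*((ρ:ℂ)-1)⁻¹^2*(ℓ:ℂ)^2*(Ψ ρ)*(Complex.exp (Efun s σ ρ))) + (-3*((ρ:ℂ)-1)⁻¹^2*(s:ℂ)*(deriv Ψ ρ)*(Complex.exp (Efun s σ ρ))) + (-1*((ρ:ℂ)-1)⁻¹^2*(s:ℂ)*(Ψ ρ)*(Complex.exp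 (Efun s σ ρ))) + (-3*((ρ:ℂ)-1)⁻¹^2*(s:ℂ)*σ*(Ψ ρ)*(Complex.exp (Efun s σ ρ))) + (-1*((ρ:ℂ)-1)⁻¹^2*(s:ℂ)^2*(Ψ ρ)*(Complex.exp (Efun s σ ρ))) + (1*(ρ:ℂ)⁻¹*((ρ:ℂ)-1)⁻¹^2*(deriv Ψ ρ)*(Complex.exp (Efun s σ ρ))) + (1*(ρ:ℂ)⁻¹*((ρ:ℂ)-1)⁻¹^2*(Ψ ρ)*(Complex.exp (Efun s σ ρ))) + (-1*(ρ:ℂ)⁻¹*((ρ:ℂ)-1)⁻¹^2*(ℓ:ℂ)*(Ψ ρ)*(Complex.exp (Efun s σ ρ))) + (-1*(ρ:ℂ)⁻¹*((ρ:ℂ)-1)⁻¹^2*(ℓ:ℂ)^2*(Ψ ρ)*(Complex.exp (Efun s σ ρ))) + (1*(ρ:ℂ)⁻¹*((ρ:ℂ)-1)⁻¹^2*(s:ℂ)*(deriv Ψ ρ)*(Complex.exp (Efun s σ ρ))) + (2*(ρ:ℂ)⁻¹*((ρ:ℂ)-1)⁻¹^2*(s:ℂ)*(Ψ ρ)*(Complex.exp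 (Efun s σ ρ))) + (1*(ρ:ℂ)⁻¹*((ρ:ℂ)-1)⁻¹^2*(s:ℂ)^2*(Ψ ρ)*(Complex.exp (Efun s σ ρ))) + (-1*(ρ:ℂ)⁻¹^2*((ρ:ℂ)-1)⁻¹^2*(Ψ ρ)*(Complex.exp (Efun s σ ρ))) + (-1*(ρ:ℂ)⁻¹^2*((ρ:ℂ)-1)⁻¹^2*(s:ℂ)*(Ψ ρ)*(Complex.exp (Efun s σ ρ))) + (2*(ρ:ℂ)*((ρ:ℂ)-1)⁻¹^2*(Complex.exp (Efun s σ ρ))*(deriv (deriv Ψ) ρ)) + (2*(ρ:ℂ)*((ρ:ℂ)-1)⁻¹^2*(s:ℂ)*(deriv Ψ ρ)*(Complex.exp (Efun s σ ρ))) + (2*(ρ:ℂ)*((ρ:ℂ)-1)⁻¹^2*(s:ℂ)*σ*(Ψ ρ)*(Complex.exp (Efun s σ ρ))) + (-1*(ρ:ℂ)*(ρ:ℂ)⁻¹*((ρ:ℂ)-1)⁻¹^2*(Complex.exp (Efun s σ ρ))*(deriv (deriv Ψ) ρ)) + (-1*(ρ:ℂ)*(ρ:ℂ)⁻¹*((ρ:ℂ)-1)⁻¹^2*(deriv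 Ψ ρ)*(Complex.exp (Efun s σ ρ))) + (1*(ρ:ℂ)*(ρ:ℂ)⁻¹*((ρ:ℂ)-1)⁻¹^2*(ℓ:ℂ)*(Ψ ρ)*(Complex.exp (Efun s σ ρ))) + (1*(ρ:ℂ)*(ρ:ℂ)⁻¹*((ρ:ℂ)-1)⁻¹^2*(ℓ:ℂ)^2*(Ψ ρ)*(Complex.exp (Efun s σ ρ))) + (-3*(ρ:ℂ)*(ρ:ℂ)⁻¹*((ρ:ℂ)-1)⁻¹^2*(s:ℂ)*(deriv Ψ ρ)*(Complex.exp (Efun s σ ρ))) + (-1*(ρ:ℂ)*(ρ:ℂ)⁻¹*((ρ:ℂ)-1)⁻¹^2*(s:ℂ)*(Ψ ρ)*(Complex.exp (Efun s σ ρ))) + (-3*(ρ:ℂ)*(ρ:ℂ)⁻¹*((ρ:ℂ)-1)⁻¹^2*(s:ℂ)*σ*(Ψ ρ)*(Complex.exp (Efun s σ ρ))) + (-1*(ρ:ℂ)*(ρ:ℂ)⁻¹*((ρ:ℂ)-1)⁻¹^2*(s:ℂ)^2*(Ψ ρ)*(Complex.exp (Efun s σ ρ))) + (1*(ρ:ℂ)*(ρ:ℂ)⁻¹^2*((ρ:ℂ)-1)⁻¹^2*(deriv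 Ψ ρ)*(Complex.exp (Efun s σ ρ))) + (1*(ρ:ℂ)*(ρ:ℂ)⁻¹^2*((ρ:ℂ)-1)⁻¹^2*(Ψ ρ)*(Complex.exp (Efun s σ ρ))) + (-1*(ρ:ℂ)*(ρ:ℂ)⁻¹^2*((ρ:ℂ)-1)⁻¹^2*(ℓ:ℂ)*(Ψ ρ)*(Complex.exp (Efun s σ ρ))) + (-1*(ρ:ℂ)*(ρ:ℂ)⁻¹^2*((ρ:ℂ)-1)⁻¹^2*(ℓ:ℂ)^2*(Ψ ρ)*(Complex.exp (Efun s σ ρ))) + (1*(ρ:ℂ)*(ρ:ℂ)⁻¹^2*((ρ:ℂ)-1)⁻¹^2*(s:ℂ)*(deriv Ψ ρ)*(Complex.exp (Efun s σ ρ))) + (2*(ρ:ℂ)*(ρ:ℂ)⁻¹^2*((ρ:ℂ)-1)⁻¹^2*(s:ℂ)*(Ψ ρ)*(Complex.exp (Efun s σ ρ))) + (1*(ρ:ℂ)*(ρ:ℂ)⁻¹^2*((ρ:ℂ)-1)⁻¹^2*(s:ℂ)^2*(Ψ ρ)*(Complex.exp (Efun s σ ρ))) + (-1*(ρ:ℂ)*(ρ:ℂ)⁻¹^3*((ρ:ℂ)-1)⁻¹^2*(Ψ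 ρ)*(Complex.exp (Efun s σ ρ))) + (-1*(ρ:ℂ)*(ρ:ℂ)⁻¹^3*((ρ:ℂ)-1)⁻¹^2*(s:ℂ)*(Ψ ρ)*(Complex.exp (Efun s σ ρ))) + (-1*(ρ:ℂ)^2*((ρ:ℂ)-1)⁻¹^2*(Complex.exp (Efun s σ ρ))*(deriv (deriv Ψ) ρ)) + (2*(ρ:ℂ)^2*(ρ:ℂ)⁻¹*((ρ:ℂ)-1)⁻¹^2*(Complex.exp (Efun s σ ρ))*(deriv (deriv Ψ) ρ)) + (2*(ρ:ℂ)^2*(ρ:ℂ)⁻¹*((ρ:ℂ)-1)⁻¹^2*(s:ℂ)*(deriv Ψ ρ)*(Complex.exp (Efun s σ ρ))) + (2*(ρ:ℂ)^2*(ρ:ℂ)⁻¹*((ρ:ℂ)-1)⁻¹^2*(s:ℂ)*σ*(Ψ ρ)*(Complex.exp (Efun s σ ρ))) + (-1*(ρ:ℂ)^2*(ρ:ℂ)⁻¹^2*((ρ:ℂ)-1)⁻¹^2*(deriv Ψ ρ)*(Complex.exp (Efun s σ ρ))) + (-3*(ρ:ℂ)^2*(ρ:ℂ)⁻¹^2*((ρ:ℂ)-1)⁻¹^2*(s:ℂ)*(deriv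 Ψ ρ)*(Complex.exp (Efun s σ ρ))) + (-1*(ρ:ℂ)^3*(ρ:ℂ)⁻¹*((ρ:ℂ)-1)⁻¹^2*(Complex.exp (Efun s σ ρ))*(deriv (deriv Ψ) ρ)) + (2*(ρ:ℂ)^3*(ρ:ℂ)⁻¹^2*((ρ:ℂ)-1)⁻¹^2*(s:ℂ)*(deriv Ψ ρ)*(Complex.exp (Efun s σ ρ)))) * hu + ((-1*(Complex.exp (Efun s σ ρ))*(deriv (deriv Ψ) ρ)) + (1*σ^2*(Ψ ρ)*(Complex.exp (Efun s σ ρ))) + (1*((ρ:ℂ)-1)⁻¹*(Complex.exp (Efun s σ ρ))*(deriv (deriv Ψ) ρ)) + (1*((ρ:ℂ)-1)⁻¹*σ^2*(Ψ ρ)*(Complex.exp (Efun s σ ρ))) + (2*((ρ:ℂ)-1)⁻¹*(s:ℂ)*(deriv Ψ ρ)*(Complex.exp (Efun s σ ρ))) + (2*((ρ:ℂ)-1)⁻¹*(s:ℂ)*σ*(Ψ ρ)*(Complex.exp (Efun s σ ρ))) + (-1*(ρ:ℂ)*((ρ:ℂ)-1)⁻¹*(Complex.exp (Efun s σ ρ))*(deriv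 (deriv Ψ) ρ)) + (1*(ρ:ℂ)*((ρ:ℂ)-1)⁻¹*σ^2*(Ψ ρ)*(Complex.exp (Efun s σ ρ)))) * hv + ((-1*(deriv Ψ ρ)*(Complex.exp (Efun s σ ρ))) + (-1*σ*(Ψ ρ)*(Complex.exp (Efun s σ ρ))) + (-1*(s:ℂ)*(deriv Ψ ρ)*(Complex.exp (Efun s σ ρ))) + (-3*(s:ℂ)*σ*(Ψ ρ)*(Complex.exp (Efun s σ ρ))) + (1*((ρ:ℂ)-1)⁻¹*(deriv Ψ ρ)*(Complex.exp (Efun s σ ρ))) + (-1*((ρ:ℂ)-1)⁻¹*(ℓ:ℂ)*(Ψ ρ)*(Complex.exp (Efun s σ ρ))) + (-1*((ρ:ℂ)-1)⁻¹*(ℓ:ℂ)^2*(Ψ ρ)*(Complex.exp (Efun s σ ρ))) + (1*((ρ:ℂ)-1)⁻¹*(s:ℂ)*(deriv Ψ ρ)*(Complex.exp (Efun s σ ρ))) + (1*((ρ:ℂ)-1)⁻¹*(s:ℂ)*(Ψ ρ)*(Complex.exp (Efun s σ ρ))) + (1*((ρ:ℂ)-1)⁻¹*(s:ℂ)^2*(Ψ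 ρ)*(Complex.exp (Efun s σ ρ))) + (1*(ρ:ℂ)⁻¹*(Ψ ρ)*(Complex.exp (Efun s σ ρ))) + (1*(ρ:ℂ)⁻¹*(s:ℂ)*(Ψ ρ)*(Complex.exp (Efun s σ ρ))) + (-1*(ρ:ℂ)⁻¹*((ρ:ℂ)-1)⁻¹*(Ψ ρ)*(Complex.exp (Efun s σ ρ))) + (-1*(ρ:ℂ)⁻¹*((ρ:ℂ)-1)⁻¹*(s:ℂ)*(Ψ ρ)*(Complex.exp (Efun s σ ρ)))) * huv

/-- `Ψ̂` satisfies the frequency-domain Bardeen–Press equation on `(1,∞)` iff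
`Φ̂ = e^{σρ_*}(ρ/(ρ−1))^s Ψ̂` satisfies the confluent Heun normal form
`Φ̂'' + P(ρ,σ)Φ̂' + Q(ρ)Φ̂ = 0` there. -/
theorem bardeenPress_iff_confluentHeun
    (s ℓ : ℤ) (hsl : |s| ≤ ℓ) (σ : ℂ) (Ψ : ℝ → ℂ)
    (hΨ1 : ∀ ρ ∈ Set.Ioi (1:ℝ), DifferentiableAt ℝ Ψ ρ)
    (hΨ2 : ∀ ρ ∈ Set.Ioi (1:ℝ), DifferentiableAt ℝ (deriv Ψ) ρ) :
    (∀ ρ ∈ Set.Ioi (1:ℝ),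
        -(Dstar (Dstar Ψ) ρ) + (2*(s:ℂ)*((ρ:ℂ) - 1/2)/(ρ:ℂ)^2) * Dstar Ψ ρ +
          (2*(s:ℂ)*σ*((ρ:ℂ) - 3/2)/(ρ:ℂ)^2) * Ψ ρ + Vpot s ℓ ρ * Ψ ρ +
          σ^2 * Ψ ρ = 0) ↔
      (∀ ρ ∈ Set.Ioi (1:ℝ),
        deriv (deriv (PhiOfPsi s σ Ψ)) ρ + Pcoef s σ (ρ:ℂ) * deriv (PhiOfPsi s σ Ψ) ρ +
          Qcoef s ℓ (ρ:ℂ) * PhiOfPsi s σ Ψ ρ = 0) := by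
  constructor
  · intro H ρ hρ
    rw [key s ℓ σ Ψ hΨ1 hΨ2 hρ, H ρ hρ, mul_zero]
  · intro H ρ hρ
    have hρ' : (1:ℝ) < ρ := hρ
    have hk := key s ℓ σ Ψ hΨ1 hΨ2 hρ
    rw [H ρ hρ] at hk
    have ht0 : (ρ:ℂ) ≠ 0 := Complex.ofReal_ne_zero.mpr (ne_of_gt (by linarith))
    have ht1 : (ρ:ℂ) - 1 ≠ 0 := by
      have h : ((ρ - 1 : ℝ) : ℂ) ≠ 0 := Complex.ofReal_ne_zero.mpr (ne_of_gt (by linarith))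
      have h2 : ((ρ - 1 : ℝ) : ℂ) = (ρ:ℂ) - 1 := by push_cast; ring
      rwa [h2] at h
    have hfac : (-(Complex.exp (Efun s σ ρ)) * (ρ:ℂ)^2 / ((ρ:ℂ)-1)^2) ≠ 0 := by
      apply div_ne_zero
      · exact mul_ne_zero (neg_ne_zero.mpr (Complex.exp_ne_zero _)) (pow_ne_zero _ ht0)
      · exact pow_ne_zero _ ht1
    exact (mul_eq_zero.mp hk.symm).resolve_left hfac
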